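/- With {eᵢ}, {e′ᵢ} an orthonormal system in H, set xᵢ = λᵢ^{1/2} ℓ(eᵢ) + λᵢ^{-1/2} ℓ(e′ᵢ)* and yⱼ = λⱼ^{1/2} r(e′ⱼ) + λⱼ^{-1/2} r(eⱼ)* on the full Fock space F(H), with λᵢ > 0. Then the families double-commute: xᵢ yⱼ = yⱼ xᵢ and xᵢ* yⱼ = yⱼ xᵢ* for all i, j. -/

import Mathlib

/-! The (algebraic) full Fock space over `H = ℓ²(I ⊕ I)`, whose orthonormal basis splits
as `{eᵢ} ∪ {e′ᵢ}` (`eᵢ = Sum.inl i`, `e′ᵢ = Sum.inr i`), is realized on its canonical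
dense subspace `List (I ⊕ I) →₀ ℂ`, with creation/annihilation operators acting
algebraically. -/

noncomputable section

/-- Algebraic full Fock space over `ℓ²(ι)`. -/
abbrev Fock (ι : Type*) := List ι →₀ ℂ

/-- Left creation by a basis vector. -/
def creL {ι : Type*} (i : ι) : Fock ι →ₗ[ℂ] Fock ι :=
  Finsupp.lmapDomain ℂ ℂ (List.cons i)

/-- Left annihilation (adjoint of left creation). -/
def annL {ι : Type*} (i : ι) : Fock ι →ₗ[ℂ] Fock ι :=
  Finsupp.lcomapDomain (List.cons i) List.cons_injective

/-- Right creation by a basis vector. -/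
def creR {ι : Type*} (i : ι) : Fock ι →ₗ[ℂ] Fock ι :=
  Finsupp.lmapDomain ℂ ℂ (fun w => w ++ [i])

/-- Right annihilation (adjoint of right creation). -/
def annR {ι : Type*} (i : ι) : Fock ι →ₗ[ℂ] Fock ι :=
  Finsupp.lcomapDomain (fun w => w ++ [i]) (List.append_left_injective [i])

section Aux

variable {ι : Type*} (a b : ι)

lemma creL_single (w : List ι) (c : ℂ) : creL a (Finsupp.single w c) = Finsupp.single (a :: w) c := by
  simp [creL, Finsupp.mapDomain_single]

lemma creR_single (w : List ι) (c : ℂ) : creR a (Finsupp.single w c) = Finsupp.single (w ++ [a]) c := by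
  simp [creR, Finsupp.mapDomain_single]

lemma annL_single_nil (c : ℂ) : annL a (Finsupp.single ([] : List ι) c) = 0 := by
  ext u
  simp [annL, Finsupp.lcomapDomain, Finsupp.comapDomain_apply, Finsupp.single_apply]

lemma annL_single_cons_self (t : List ι) (c : ℂ) :
    annL a (Finsupp.single (a :: t) c) = Finsupp.single t c := by
  ext u
  simp [annL, Finsupp.lcomapDomain, Finsupp.comapDomain_apply, Finsupp.single_apply]

lemma annL_single_cons_ne {x : ι} (h : x ≠ a) (t : List ι) (c : ℂ) :
    annL a (Finsupp.single (x :: t) c) = 0 := by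
  ext u
  simp only [annL, Finsupp.lcomapDomain, LinearMap.coe_mk, AddHom.coe_mk,
    Finsupp.comapDomain_apply, Finsupp.coe_zero, Pi.zero_apply]
  rw [Finsupp.single_eq_of_ne']
  simp [h]

lemma annR_single_nil (c : ℂ) : annR a (Finsupp.single ([] : List ι) c) = 0 := by
  ext u
  simp [annR, Finsupp.lcomapDomain, Finsupp.comapDomain_apply, Finsupp.single_apply]

lemma annR_single_concat_self (t : List ι) (c : ℂ) :
    annR a (Finsupp.single (t ++ [a]) c) = Finsupp.single t c := by
  ext u
  simp only [annR, Finsupp.lcomapDomain, LinearMap.coe_mk, AddHom.coe_mk,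
    Finsupp.comapDomain_apply, Finsupp.single_apply]
  by_cases h : t = u
  · subst h; simp
  · rw [Finsupp.single_eq_of_ne' h, Finsupp.single_eq_of_ne']
    exact fun heq => h (List.append_left_injective [a] heq)

lemma annR_single_concat_ne {y : ι} (h : y ≠ a) (t : List ι) (c : ℂ) :
    annR a (Finsupp.single (t ++ [y]) c) = 0 := by
  ext u
  simp only [annR, Finsupp.lcomapDomain, LinearMap.coe_mk, AddHom.coe_mk,
    Finsupp.comapDomain_apply, Finsupp.coe_zero, Pi.zero_apply]
  rw [Finsupp.single_eq_of_ne']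
  intro heq
  have := (List.append_inj' heq rfl).2
  simp at this
  exact h this

/-- Projection onto the vacuum. -/
def P0 {ι : Type*} : Fock ι →ₗ[ℂ] Fock ι :=
  (Finsupp.lsingle ([] : List ι)).comp (Finsupp.lapply ([] : List ι))

lemma P0_single_nil (c : ℂ) :
    (P0 : Fock ι →ₗ[ℂ] Fock ι) (Finsupp.single [] c) = Finsupp.single [] c := by
  simp [P0]

lemma P0_single_ne {w : List ι} (h : w ≠ []) (c : ℂ) :
    (P0 : Fock ι →ₗ[ℂ] Fock ι) (Finsupp.single w c) = 0 := by
  simp [P0, Finsupp.single_eq_of_ne' h]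

lemma creL_creR_comm : (creL a).comp (creR b) = (creR b).comp (creL a) := by
  refine Finsupp.lhom_ext fun w c => ?_
  simp [creL_single, creR_single]

lemma annL_annR_comm : (annL a).comp (annR b) = (annR b).comp (annL a) := by
  refine Finsupp.lhom_ext fun w c => ?_
  simp only [LinearMap.comp_apply]
  rcases w with _ | ⟨x, t⟩
  · rw [annL_single_nil, annR_single_nil, map_zero, map_zero]
  rcases t.eq_nil_or_concat with rfl | ⟨s, y, rfl⟩
  · by_cases hy : x = b
    · subst hy
      conv_lhs => rw [show (x :: ([] : List ι)) = [] ++ [x] from rfl,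
        annR_single_concat_self, annL_single_nil]
      by_cases hx : x = a
      · subst hx
        conv_rhs => rw [annL_single_cons_self, annR_single_nil]
      · conv_rhs => rw [annL_single_cons_ne _ hx]
        rw [map_zero]
    · conv_lhs => rw [show (x :: ([] : List ι)) = [] ++ [x] from rfl,
        annR_single_concat_ne _ hy]
      rw [map_zero]
      by_cases hx : x = a
      · subst hx
        conv_rhs => rw [annL_single_cons_self, annR_single_nil]
      · conv_rhs => rw [annL_single_cons_ne _ hx]
        rw [map_zero]
  · simp only [List.concat_eq_append]
    by_cases hy : y = b <;> by_cases hx : x = a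
    · subst hy; subst hx
      conv_lhs => rw [show x :: (s ++ [y]) = (x :: s) ++ [y] from rfl,
        annR_single_concat_self, annL_single_cons_self]
      conv_rhs => rw [annL_single_cons_self, annR_single_concat_self]
    · subst hy
      conv_lhs => rw [show x :: (s ++ [y]) = (x :: s) ++ [y] from rfl,
        annR_single_concat_self, annL_single_cons_ne _ hx]
      conv_rhs => rw [annL_single_cons_ne _ hx]
      rw [map_zero]
    · subst hx
      conv_lhs => rw [show x :: (s ++ [y]) = (x :: s) ++ [y] from rfl,
        annR_single_concat_ne _ hy]
      rw [map_zero]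
      conv_rhs => rw [annL_single_cons_self, annR_single_concat_ne _ hy]
    · conv_lhs => rw [show x :: (s ++ [y]) = (x :: s) ++ [y] from rfl,
        annR_single_concat_ne _ hy]
      rw [map_zero]
      conv_rhs => rw [annL_single_cons_ne _ hx]
      rw [map_zero]

lemma annL_creR (hne : a ≠ b) : (annL a).comp (creR b) = (creR b).comp (annL a) := by
  refine Finsupp.lhom_ext fun w c => ?_
  simp only [LinearMap.comp_apply, creR_single]
  rcases w with _ | ⟨x, t⟩
  · conv_lhs => rw [List.nil_append, annL_single_cons_ne _ (Ne.symm hne)]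
    conv_rhs => rw [annL_single_nil]
    rw [map_zero]
  · by_cases hx : x = a
    · subst hx
      conv_lhs => rw [List.cons_append, annL_single_cons_self]
      conv_rhs => rw [annL_single_cons_self, creR_single]
    · conv_lhs => rw [List.cons_append, annL_single_cons_ne _ hx]
      conv_rhs => rw [annL_single_cons_ne _ hx]
      rw [map_zero]

lemma annL_creR_self : (annL a).comp (creR a) = (creR a).comp (annL a) + P0 := by
  refine Finsupp.lhom_ext fun w c => ?_
  simp only [LinearMap.comp_apply, LinearMap.add_apply, creR_single]
  rcases w with _ | ⟨x, t⟩
  · conv_lhs => rw [List.nil_append, annL_single_cons_self]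
    conv_rhs => rw [annL_single_nil]
    rw [map_zero, zero_add, P0_single_nil]
  · by_cases hx : x = a
    · subst hx
      conv_lhs => rw [List.cons_append, annL_single_cons_self]
      conv_rhs => rw [annL_single_cons_self, creR_single,
        P0_single_ne (List.cons_ne_nil _ _)]
      rw [add_zero]
    · conv_lhs => rw [List.cons_append, annL_single_cons_ne _ hx]
      conv_rhs => rw [annL_single_cons_ne _ hx,
        P0_single_ne (List.cons_ne_nil _ _)]
      rw [map_zero, add_zero]

lemma annR_creL (hne : a ≠ b) : (annR a).comp (creL b) = (creL b).comp (annR a) := by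
  refine Finsupp.lhom_ext fun w c => ?_
  simp only [LinearMap.comp_apply, creL_single]
  rcases w.eq_nil_or_concat with rfl | ⟨s, y, rfl⟩
  · conv_lhs => rw [show (b :: ([] : List ι)) = [] ++ [b] from rfl,
      annR_single_concat_ne _ (Ne.symm hne)]
    conv_rhs => rw [annR_single_nil]
    rw [map_zero]
  · simp only [List.concat_eq_append]
    by_cases hy : y = a
    · subst hy
      conv_lhs => rw [show b :: (s ++ [y]) = (b :: s) ++ [y] from rfl,
        annR_single_concat_self]
      conv_rhs => rw [annR_single_concat_self, creL_single]
    · conv_lhs => rw [show b :: (s ++ [y]) = (b :: s) ++ [y] from rfl,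
        annR_single_concat_ne _ hy]
      conv_rhs => rw [annR_single_concat_ne _ hy]
      rw [map_zero]

lemma annR_creL_self : (annR a).comp (creL a) = (creL a).comp (annR a) + P0 := by
  refine Finsupp.lhom_ext fun w c => ?_
  simp only [LinearMap.comp_apply, LinearMap.add_apply, creL_single]
  rcases w.eq_nil_or_concat with rfl | ⟨s, y, rfl⟩
  · conv_lhs => rw [show (a :: ([] : List ι)) = [] ++ [a] from rfl,
      annR_single_concat_self]
    conv_rhs => rw [annR_single_nil]
    rw [map_zero, zero_add, P0_single_nil]
  · simp only [List.concat_eq_append]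
    by_cases hy : y = a
    · subst hy
      conv_lhs => rw [show y :: (s ++ [y]) = (y :: s) ++ [y] from rfl,
        annR_single_concat_self]
      conv_rhs => rw [annR_single_concat_self, creL_single,
        P0_single_ne (by simp)]
      rw [add_zero]
    · conv_lhs => rw [show a :: (s ++ [y]) = (a :: s) ++ [y] from rfl,
        annR_single_concat_ne _ hy]
      conv_rhs => rw [annR_single_concat_ne _ hy,
        P0_single_ne (by simp)]
      rw [map_zero, add_zero]

end Aux

variable {I : Type*} (lam : I → ℝ)

/-- The generalized circular element `xᵢ = λᵢ^{1/2} ℓ(eᵢ) + λᵢ^{-1/2} ℓ(e′ᵢ)*`. -/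
def X (i : I) : Fock (I ⊕ I) →ₗ[ℂ] Fock (I ⊕ I) :=
  (Real.sqrt (lam i) : ℂ) • creL (Sum.inl i) +
    ((Real.sqrt (lam i) : ℂ))⁻¹ • annL (Sum.inr i)

/-- The adjoint `xᵢ* = λᵢ^{1/2} ℓ(eᵢ)* + λᵢ^{-1/2} ℓ(e′ᵢ)`. -/
def Xstar (i : I) : Fock (I ⊕ I) →ₗ[ℂ] Fock (I ⊕ I) :=
  (Real.sqrt (lam i) : ℂ) • annL (Sum.inl i) +
    ((Real.sqrt (lam i) : ℂ))⁻¹ • creL (Sum.inr i)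

/-- The generalized circular element `yⱼ = λⱼ^{1/2} r(e′ⱼ) + λⱼ^{-1/2} r(eⱼ)*`. -/
def Y (j : I) : Fock (I ⊕ I) →ₗ[ℂ] Fock (I ⊕ I) :=
  (Real.sqrt (lam j) : ℂ) • creR (Sum.inr j) +
    ((Real.sqrt (lam j) : ℂ))⁻¹ • annR (Sum.inl j)

/-- The families `{xᵢ}` and `{yⱼ}` double commute: `xᵢ yⱼ = yⱼ xᵢ` and
`xᵢ* yⱼ = yⱼ xᵢ*` for all `i, j`. -/
theorem generalized_circular_double_commute (hlam : ∀ i, 0 < lam i) (i j : I) :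
    (X lam i).comp (Y lam j) = (Y lam j).comp (X lam i) ∧
    (Xstar lam i).comp (Y lam j) = (Y lam j).comp (Xstar lam i) := by
  constructor
  · by_cases hij : i = j
    · subst hij
      have hs : ((Real.sqrt (lam i) : ℂ)) ≠ 0 := by
        exact_mod_cast Real.sqrt_ne_zero'.2 (hlam i)
      unfold X Y
      simp only [LinearMap.add_comp, LinearMap.comp_add, LinearMap.smul_comp,
        LinearMap.comp_smul]
      rw [creL_creR_comm, annL_annR_comm, annL_creR_self, annR_creL_self]
      simp only [smul_add, smul_smul]
      rw [inv_mul_cancel₀ hs, mul_inv_cancel₀ hs]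
      module
    · have h1 : (Sum.inr i : I ⊕ I) ≠ Sum.inr j := by simpa using hij
      have h2 : (Sum.inl j : I ⊕ I) ≠ Sum.inl i := by
        simpa using fun h => hij h.symm
      unfold X Y
      simp only [LinearMap.add_comp, LinearMap.comp_add, LinearMap.smul_comp,
        LinearMap.comp_smul]
      rw [creL_creR_comm, annL_annR_comm, annL_creR _ _ h1, annR_creL _ _ h2]
      module
  · have h1 : (Sum.inl i : I ⊕ I) ≠ Sum.inr j := by simp
    have h2 : (Sum.inl j : I ⊕ I) ≠ Sum.inr i := by simp
    unfold Xstar Y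
    simp only [LinearMap.add_comp, LinearMap.comp_add, LinearMap.smul_comp,
      LinearMap.comp_smul]
    rw [creL_creR_comm, annL_annR_comm, annL_creR _ _ h1, annR_creL _ _ h2]
    module


end
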